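/- (Density) Let L be a bounded lattice, X = D♭(L), and let e : L → C(X) = MPE(X,2) be the embedding a ↦ e_a. Then every element φ of C(X) satisfies φ = ⋁{ ⋀ e(F) : F a filter of L with ⋀ e(F) ≤ φ } and φ = ⋀{ ⋁ e(I) : I an ideal of L with φ ≤ ⋁ e(I) }, where the joins and meets are taken in the complete lattice C(X); in particular every element of C(X) is both a join of meets and a meet of joins of elements of e(L), i.e. the completion (e, C(X)) is dense. -/

import Mathlib

namespace CanExt

open Classical

/-- A partial map from `X` into the two-element chain `{0,1}` (encoded as `Bool`,
with `false` playing the role of `0` and `true` the role of `1`);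
`φ x = none` means `x` is outside the domain of `φ`. -/
abbrev PMap (X : Type*) := X → Option Bool

/-- The preimage of `1` of a partial map. -/
def pre1 {X : Type*} (φ : PMap X) : Set X := {x | φ x = some true}

/-- The preimage of `0` of a partial map. -/
def pre0 {X : Type*} (φ : PMap X) : Set X := {x | φ x = some false}

/-- A partial map is `E`-preserving if whenever `x, y` lie in its domain and
`(x,y) ∈ E`, then `φ x ≤ φ y`. -/
def EPres {X : Type*} (E : X → X → Prop) (φ : PMap X) : Prop :=
  ∀ ⦃x y : X⦄, E x y → ∀ ⦃a b : Bool⦄, φ x = some a → φ y = some b → a ≤ b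

/-- `PExt ψ φ` : the partial map `ψ` extends the partial map `φ`. -/
def PExt {X : Type*} (ψ φ : PMap X) : Prop :=
  ∀ ⦃x : X⦄ ⦃a : Bool⦄, φ x = some a → ψ x = some a

/-- The set of maximal partial `E`-preserving maps from `(X,E)` into the
two-element chain `2`. -/
def MPE {X : Type*} (E : X → X → Prop) : Set (PMap X) :=
  {φ | EPres E φ ∧ ∀ ψ : PMap X, EPres E ψ → PExt ψ φ → ψ = φ}

/-- A partial morphism from a graph with topology `(X,E,t)` to `2_τ`:
the preimages of `1` and `0` are `t`-closed (equivalently, the domain is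
closed and the restriction to the domain is continuous into discrete `2`),
and the map is `E`-preserving. -/
def PMorphT {X : Type*} (E : X → X → Prop) (t : TopologicalSpace X) (φ : PMap X) : Prop :=
  EPres E φ ∧ @IsClosed X t (pre1 φ) ∧ @IsClosed X t (pre0 φ)

/-- The set of maximal partial morphisms from `(X,E,t)` to `2_τ`. -/
def MPM {X : Type*} (E : X → X → Prop) (t : TopologicalSpace X) : Set (PMap X) :=
  {φ | PMorphT E t φ ∧ ∀ ψ : PMap X, PMorphT E t ψ → PExt ψ φ → ψ = φ}

/-- The relation `E` between partial maps on a lattice `L`: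
`(f,g) ∈ E` iff `f x ≤ g x` for all `x ∈ dom f ∩ dom g`. -/
def ErelP {L : Type*} (f g : PMap L) : Prop :=
  ∀ ⦃x : L⦄ ⦃a b : Bool⦄, f x = some a → g x = some b → a ≤ b

/-- `f ≤₁ g` iff `f⁻¹(1) ⊆ g⁻¹(1)`. -/
def le1 {L : Type*} (f g : PMap L) : Prop := pre1 f ⊆ pre1 g

/-- `f ≤₂ g` iff `f⁻¹(0) ⊆ g⁻¹(0)`. -/
def le2 {L : Type*} (f g : PMap L) : Prop := pre0 f ⊆ pre0 g

section Lat

variable (L : Type*) [Lattice L] [BoundedOrder L]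

/-- A partial homomorphism from a bounded lattice `L` to the two-element
bounded lattice `2_B`: its domain is a `{0,1}`-sublattice of `L` and the
restriction to the domain is a bounded-lattice homomorphism. -/
def PHom (f : PMap L) : Prop :=
  f ⊥ = some false ∧ f ⊤ = some true ∧
  ∀ ⦃a b : L⦄ ⦃x y : Bool⦄, f a = some x → f b = some y →
    f (a ⊓ b) = some (x ⊓ y) ∧ f (a ⊔ b) = some (x ⊔ y)

/-- The set of maximal partial homomorphisms (MPHs) from `L` to `2_B`. -/
def MPHset : Set (PMap L) := {f | PHom L f ∧ ∀ g : PMap L, PHom L g → PExt g f → g = f}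

/-- The underlying set of the graph `D♭(L)`. -/
abbrev MPHsub := {f : PMap L // f ∈ MPHset L}

/-- The relation `E` on `MPH(L, 2_B)`, giving the graph `D♭(L)`. -/
def EM (f g : MPHsub L) : Prop := ErelP f.1 g.1

/-- The evaluation map `e_a` on `MPH(L,2_B)` : `e_a(f) = f(a)` if `a ∈ dom f`. -/
def evalM (a : L) : PMap (MPHsub L) := fun f => f.1 a

/-- `V_a = {f ∈ MPH(L,2_B) : f(a) = 0}`. -/
def VaM (a : L) : Set (MPHsub L) := {f | f.1 a = some false}

/-- `W_a = {f ∈ MPH(L,2_B) : f(a) = 1}`. -/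
def WaM (a : L) : Set (MPHsub L) := {f | f.1 a = some true}

/-- The topology on `MPH(L,2_B)` with the sets `V_a`, `W_a` as a subbasis of
closed sets. -/
def tauM : TopologicalSpace (MPHsub L) :=
  TopologicalSpace.generateFrom {U | ∃ a : L, U = (VaM L a)ᶜ ∨ U = (WaM L a)ᶜ}

/-- A (nonempty) lattice filter. -/
def IsLatFilter (F : Set L) : Prop :=
  F.Nonempty ∧ (∀ ⦃a b : L⦄, a ∈ F → a ≤ b → b ∈ F) ∧
    (∀ ⦃a b : L⦄, a ∈ F → b ∈ F → a ⊓ b ∈ F)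

/-- A (nonempty) lattice ideal. -/
def IsLatIdeal (I : Set L) : Prop :=
  I.Nonempty ∧ (∀ ⦃a b : L⦄, a ∈ I → b ≤ a → b ∈ I) ∧
    (∀ ⦃a b : L⦄, a ∈ I → b ∈ I → a ⊔ b ∈ I)

/-- The set of special partial homomorphisms (SPHs) from `L` to `2_B`:
`f⁻¹(1)` is a nonempty filter, `f⁻¹(0)` is a nonempty ideal, and they are
disjoint. -/
def SPHset : Set (PMap L) :=
  {f | IsLatFilter L (pre1 f) ∧ IsLatIdeal L (pre0 f) ∧ Disjoint (pre1 f) (pre0 f)}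

/-- The underlying set of the graph `D̄♭(L)`. -/
abbrev SPHsub := {f : PMap L // f ∈ SPHset L}

/-- The relation `E` on `SPH(L, 2_B)`, giving the graph `D̄♭(L)`. -/
def ES (f g : SPHsub L) : Prop := ErelP f.1 g.1

/-- The evaluation map `ē_a` on `SPH(L,2_B)`. -/
def evalS (a : L) : PMap (SPHsub L) := fun f => f.1 a

/-- `V_a = {f ∈ SPH(L,2_B) : f(a) = 0}`. -/
def VaS (a : L) : Set (SPHsub L) := {f | f.1 a = some false}

/-- `W_a = {f ∈ SPH(L,2_B) : f(a) = 1}`. -/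
def WaS (a : L) : Set (SPHsub L) := {f | f.1 a = some true}

/-- The topology on `SPH(L,2_B)` with the sets `V_a`, `W_a` as a subbasis of
closed sets. -/
def tauS : TopologicalSpace (SPHsub L) :=
  TopologicalSpace.generateFrom {U | ∃ a : L, U = (VaS L a)ᶜ ∨ U = (WaS L a)ᶜ}

/-- The carrier of the completion built from `D♭(L)`. -/
abbrev CX := {φ : PMap (MPHsub L) // φ ∈ MPE (EM L)}

/-- The carrier of the completion built from `D̄♭(L)`. -/
abbrev CY := {φ : PMap (SPHsub L) // φ ∈ MPE (ES L)}

end Lat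


section Aux

section GeneralAux

variable {X : Type*} {E : X → X → Prop}


variable {X : Type*} {E : X → X → Prop}

lemma mem_pre1 {φ : PMap X} {x : X} : x ∈ pre1 φ ↔ φ x = some true := Iff.rfl
lemma mem_pre0 {φ : PMap X} {x : X} : x ∈ pre0 φ ↔ φ x = some false := Iff.rfl

def lam (E : X → X → Prop) (B : Set X) : Set X := {x | ∀ y ∈ B, ¬ E x y}
def rho (E : X → X → Prop) (A : Set X) : Set X := {y | ∀ x ∈ A, ¬ E x y}

lemma lam_anti {B B' : Set X} (h : B ⊆ B') : lam E B' ⊆ lam E B :=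
  fun x hx y hy => hx y (h hy)
lemma rho_anti {A A' : Set X} (h : A ⊆ A') : rho E A' ⊆ rho E A :=
  fun y hy x hx => hy x (h hx)
lemma subset_lam_rho (A : Set X) : A ⊆ lam E (rho E A) := fun x hx y hy => hy x hx
lemma subset_rho_lam (B : Set X) : B ⊆ rho E (lam E B) := fun y hy x hx => hx y hy
lemma lam_rho_lam (B : Set X) : lam E (rho E (lam E B)) = lam E B :=
  Set.Subset.antisymm (lam_anti (subset_rho_lam B)) (subset_lam_rho _)
lemma rho_lam_rho (A : Set X) : rho E (lam E (rho E A)) = rho E A :=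
  Set.Subset.antisymm (rho_anti (subset_lam_rho A)) (subset_rho_lam _)

lemma bool_not_le {a b : Bool} (h : ¬ a ≤ b) : a = true ∧ b = false := by
  cases a <;> cases b <;> simp_all

lemma not_true_le_false : ¬ ((true : Bool) ≤ false) := by decide

lemma mpe_pre0_eq (hrefl : ∀ x, E x x) {φ : PMap X} (hφ : φ ∈ MPE E) :
    pre0 φ = rho E (pre1 φ) := by
  apply Set.Subset.antisymm
  · intro y hy x hx hE
    exact not_true_le_false (hφ.1 hE hx hy)
  · intro y hy
    cases hy' : φ y with
    | some b =>
      cases b with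
      | false => exact hy'
      | true => exact absurd (hrefl y) (hy y hy')
    | none =>
      exfalso
      have hψE : EPres E (fun z => if z = y then some false else φ z) := by
        intro z w hzw a b hz hw
        simp only at hz hw
        by_cases hzy : z = y
        · rw [if_pos hzy] at hz
          cases hz
          exact Bool.false_le b
        · rw [if_neg hzy] at hz
          by_cases hwy : w = y
          · rw [if_pos hwy] at hw
            cases hw
            cases a with
            | false => exact le_refl _
            | true => exact absurd (hwy ▸ hzw) (hy z hz)
          · rw [if_neg hwy] at hw
            exact hφ.1 hzw hz hw
      have hext : PExt (fun z => if z = y then some false else φ z) φ := by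
        intro z a hz
        have hzy : z ≠ y := fun h => by rw [h, hy'] at hz; cases hz
        simpa only [if_neg hzy] using hz
      have heq := hφ.2 _ hψE hext
      have h2 : (fun z => if z = y then some false else φ z) y = some false := by simp
      rw [heq, hy'] at h2
      cases h2

lemma mpe_pre1_eq (hrefl : ∀ x, E x x) {φ : PMap X} (hφ : φ ∈ MPE E) :
    pre1 φ = lam E (pre0 φ) := by
  apply Set.Subset.antisymm
  · intro x hx y hy hE
    exact not_true_le_false (hφ.1 hE hx hy)
  · intro x hx
    cases hx' : φ x with
    | some b =>
      cases b with
      | true => exact hx'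
      | false => exact absurd (hrefl x) (hx x hx')
    | none =>
      exfalso
      have hψE : EPres E (fun z => if z = x then some true else φ z) := by
        intro z w hzw a b hz hw
        simp only at hz hw
        by_cases hwy : w = x
        · rw [if_pos hwy] at hw
          cases hw
          exact Bool.le_true a
        · rw [if_neg hwy] at hw
          by_cases hzy : z = x
          · rw [if_pos hzy] at hz
            cases hz
            cases b with
            | true => exact le_refl _
            | false => exact absurd (hzy ▸ hzw) (hx w hw)
          · rw [if_neg hzy] at hz
            exact hφ.1 hzw hz hw
      have hext : PExt (fun z => if z = x then some true else φ z) φ := by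
        intro z a hz
        have hzy : z ≠ x := fun h => by rw [h, hx'] at hz; cases hz
        simpa only [if_neg hzy] using hz
      have heq := hφ.2 _ hψE hext
      have h2 : (fun z => if z = x then some true else φ z) x = some true := by simp
      rw [heq, hx'] at h2
      cases h2

lemma mpe_ext (hrefl : ∀ x, E x x) {φ ψ : PMap X} (hφ : φ ∈ MPE E) (hψ : ψ ∈ MPE E)
    (h : pre1 φ = pre1 ψ) : φ = ψ := by
  have h0 : pre0 φ = pre0 ψ := by
    rw [mpe_pre0_eq hrefl hφ, mpe_pre0_eq hrefl hψ, h]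
  have h1 : ∀ x, φ x = some true ↔ ψ x = some true := fun x => Set.ext_iff.mp h x
  have h2 : ∀ x, φ x = some false ↔ ψ x = some false := fun x => Set.ext_iff.mp h0 x
  funext x
  cases hx : φ x with
  | some b =>
    cases b with
    | true => exact ((h1 x).mp hx).symm
    | false => exact ((h2 x).mp hx).symm
  | none =>
    cases hx' : ψ x with
    | none => rfl
    | some b =>
      cases b with
      | true => rw [(h1 x).mpr hx'] at hx; cases hx
      | false => rw [(h2 x).mpr hx'] at hx; cases hx

noncomputable def mkM (A B : Set X) : PMap X :=
  fun x => if x ∈ A then some true else if x ∈ B then some false else none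

lemma mkM_eq_true_iff {A B : Set X} {x : X} : mkM A B x = some true ↔ x ∈ A := by
  simp only [mkM]
  split_ifs with h1 h2 <;> simp_all

lemma mkM_eq_false_iff {A B : Set X} (hdisj : ∀ x, x ∈ A → x ∈ B → False) {x : X} :
    mkM A B x = some false ↔ x ∈ B := by
  simp only [mkM]
  split_ifs with h1 h2
  · constructor
    · intro h; cases h
    · intro hb; exact (hdisj x h1 hb).elim
  · simp [h2]
  · simp [h2]

lemma pre1_mkM (A B : Set X) : pre1 (mkM A B) = A := Set.ext fun _ => mkM_eq_true_iff

lemma mkM_disj (hrefl : ∀ x, E x x) {A B : Set X} (hA : A = lam E B) :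
    ∀ x, x ∈ A → x ∈ B → False := by
  intro x hxA hxB
  exact (hA ▸ hxA) x hxB (hrefl x)

lemma pre0_mkM {A B : Set X} (hdisj : ∀ x, x ∈ A → x ∈ B → False) :
    pre0 (mkM A B) = B := Set.ext fun _ => mkM_eq_false_iff hdisj

lemma mkM_mem (hrefl : ∀ x, E x x) {A B : Set X} (hA : A = lam E B) (hB : B = rho E A) :
    mkM A B ∈ MPE E := by
  have hdisj := mkM_disj hrefl hA
  constructor
  · intro x y hxy a b hx hy
    cases a with
    | false => exact Bool.false_le b
    | true =>
      cases b with
      | true => exact le_refl _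
      | false =>
        exfalso
        have hxA : x ∈ A := mkM_eq_true_iff.mp hx
        have hyB : y ∈ B := (mkM_eq_false_iff hdisj).mp hy
        exact (hA ▸ hxA) y hyB hxy
  · intro ψ hψ hext
    funext x
    by_cases hxA : x ∈ A
    · have hmk : mkM A B x = some true := mkM_eq_true_iff.mpr hxA
      rw [hmk, hext hmk]
    · by_cases hxB : x ∈ B
      · have hmk : mkM A B x = some false := (mkM_eq_false_iff hdisj).mpr hxB
        rw [hmk, hext hmk]
      · have hmk : mkM A B x = none := by simp [mkM, hxA, hxB]
        rw [hmk]
        cases hx' : ψ x with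
        | none => rfl
        | some b =>
          exfalso
          cases b with
          | true =>
            have hlam : ¬ ∀ y ∈ B, ¬ E x y := fun h => hxA (hA ▸ h)
            push_neg at hlam
            obtain ⟨y, hyB, hExy⟩ := hlam
            have hmky : mkM A B y = some false := (mkM_eq_false_iff hdisj).mpr hyB
            exact not_true_le_false (hψ hExy hx' (hext hmky))
          | false =>
            have hrho : ¬ ∀ z ∈ A, ¬ E z x := fun h => hxB (hB ▸ h)
            push_neg at hrho
            obtain ⟨z, hzA, hEzx⟩ := hrho
            have hmkz : mkM A B z = some true := mkM_eq_true_iff.mpr hzA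
            exact not_true_le_false (hψ hEzx (hext hmkz) hx')

lemma lam_iUnion (S : Set {φ : PMap X // φ ∈ MPE E}) (g : {φ : PMap X // φ ∈ MPE E} → Set X) :
    lam E (⋃ ψ ∈ S, g ψ) = ⋂ ψ ∈ S, lam E (g ψ) := by
  ext x
  simp only [lam, Set.mem_setOf_eq, Set.mem_iInter, Set.mem_iUnion]
  constructor
  · intro h ψ hψ y hy; exact h y ⟨ψ, hψ, hy⟩
  · rintro h y ⟨ψ, hψ, hy⟩; exact h ψ hψ y hy

lemma rho_iUnion (S : Set {φ : PMap X // φ ∈ MPE E}) (g : {φ : PMap X // φ ∈ MPE E} → Set X) :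
    rho E (⋃ ψ ∈ S, g ψ) = ⋂ ψ ∈ S, rho E (g ψ) := by
  ext x
  simp only [rho, Set.mem_setOf_eq, Set.mem_iInter, Set.mem_iUnion]
  constructor
  · intro h ψ hψ y hy; exact h y ⟨ψ, hψ, hy⟩
  · rintro h y ⟨ψ, hψ, hy⟩; exact h ψ hψ y hy

noncomputable def infM (E : X → X → Prop) (hrefl : ∀ x, E x x)
    (S : Set {φ : PMap X // φ ∈ MPE E}) : {φ : PMap X // φ ∈ MPE E} :=
  ⟨mkM (lam E (⋃ ψ ∈ S, pre0 ψ.1)) (rho E (lam E (⋃ ψ ∈ S, pre0 ψ.1))),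
    mkM_mem hrefl (lam_rho_lam _).symm rfl⟩

lemma pre1_infM (hrefl : ∀ x, E x x) (S : Set {φ : PMap X // φ ∈ MPE E}) :
    pre1 (infM E hrefl S).1 = ⋂ ψ ∈ S, pre1 ψ.1 := by
  show pre1 (mkM _ _) = _
  rw [pre1_mkM, lam_iUnion]
  exact Set.iInter₂_congr fun ψ hψ => (mpe_pre1_eq hrefl ψ.2).symm

noncomputable def supM (E : X → X → Prop) (hrefl : ∀ x, E x x)
    (S : Set {φ : PMap X // φ ∈ MPE E}) : {φ : PMap X // φ ∈ MPE E} :=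
  ⟨mkM (lam E (rho E (⋃ ψ ∈ S, pre1 ψ.1))) (rho E (lam E (rho E (⋃ ψ ∈ S, pre1 ψ.1)))),
    mkM_mem hrefl (by rw [rho_lam_rho]) rfl⟩

lemma pre1_supM (hrefl : ∀ x, E x x) (S : Set {φ : PMap X // φ ∈ MPE E}) :
    pre1 (supM E hrefl S).1 = lam E (rho E (⋃ ψ ∈ S, pre1 ψ.1)) := pre1_mkM _ _

lemma pre0_supM (hrefl : ∀ x, E x x) (S : Set {φ : PMap X // φ ∈ MPE E}) :
    pre0 (supM E hrefl S).1 = ⋂ ψ ∈ S, pre0 ψ.1 := by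
  show pre0 (mkM _ _) = _
  rw [pre0_mkM (mkM_disj hrefl (by rw [rho_lam_rho])), rho_lam_rho, rho_iUnion]
  exact Set.iInter₂_congr fun ψ hψ => (mpe_pre0_eq hrefl ψ.2).symm

lemma pre0_anti (hrefl : ∀ x, E x x) {φ ψ : PMap X} (hφ : φ ∈ MPE E) (hψ : ψ ∈ MPE E)
    (h : pre1 φ ⊆ pre1 ψ) : pre0 ψ ⊆ pre0 φ := by
  rw [mpe_pre0_eq hrefl hφ, mpe_pre0_eq hrefl hψ]
  exact rho_anti h

lemma pre1_anti (hrefl : ∀ x, E x x) {φ ψ : PMap X} (hφ : φ ∈ MPE E) (hψ : ψ ∈ MPE E)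
    (h : pre0 ψ ⊆ pre0 φ) : pre1 φ ⊆ pre1 ψ := by
  rw [mpe_pre1_eq hrefl hφ, mpe_pre1_eq hrefl hψ]
  exact lam_anti h


end GeneralAux

section LatAux

variable {L : Type*} [Lattice L] [BoundedOrder L]


lemma em_refl (f : MPHsub L) : EM L f f := by
  intro x a b h1 h2
  rw [h1] at h2
  cases h2
  exact le_refl _

lemma phom_notdisj {f : PMap L} (hf : PHom L f) {c d x : L}
    (hc : f c = some true) (hd : f d = some false) (h1 : c ≤ x) (h2 : x ≤ d) : False := by
  have hsup := (hf.2.2 hc hd).2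
  have hcd : c ⊔ d = d := sup_eq_right.2 (h1.trans h2)
  rw [hcd, hd] at hsup
  have : (true ⊔ false : Bool) = true := by decide
  rw [this] at hsup
  cases hsup

noncomputable def satur (f : PMap L) : PMap L := fun x =>
  if ∃ c, f c = some true ∧ c ≤ x then some true
  else if ∃ d, f d = some false ∧ x ≤ d then some false else none

lemma satur_eq_true_iff {f : PMap L} {x : L} :
    satur f x = some true ↔ ∃ c, f c = some true ∧ c ≤ x := by
  simp only [satur]
  split_ifs with h1 h2 <;> simp_all

lemma satur_eq_false_iff {f : PMap L} (hf : PHom L f) {x : L} :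
    satur f x = some false ↔ ∃ d, f d = some false ∧ x ≤ d := by
  simp only [satur]
  split_ifs with h1 h2
  · constructor
    · intro h; cases h
    · rintro ⟨d, hd, hxd⟩
      obtain ⟨c, hc, hcx⟩ := h1
      exact (phom_notdisj hf hc hd hcx hxd).elim
  · simp [h2]
  · simp [h2]

lemma satur_phom {f : PMap L} (hf : PHom L f) : PHom L (satur f) := by
  refine ⟨?_, ?_, ?_⟩
  · rw [satur_eq_false_iff hf]
    exact ⟨⊥, hf.1, le_refl _⟩
  · rw [satur_eq_true_iff]
    exact ⟨⊤, hf.2.1, le_refl _⟩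
  · intro a b x y hx hy
    cases x with
    | true =>
      obtain ⟨c, hc, hca⟩ := satur_eq_true_iff.mp hx
      cases y with
      | true =>
        obtain ⟨c', hc', hc'b⟩ := satur_eq_true_iff.mp hy
        constructor
        · show satur f (a ⊓ b) = some (true ⊓ true)
          have : (true ⊓ true : Bool) = true := by decide
          rw [this, satur_eq_true_iff]
          refine ⟨c ⊓ c', ?_, inf_le_inf hca hc'b⟩
          have := (hf.2.2 hc hc').1
          simpa using this
        · show satur f (a ⊔ b) = some (true ⊔ true)
          have : (true ⊔ true : Bool) = true := by decide
          rw [this, satur_eq_true_iff]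
          exact ⟨c, hc, hca.trans le_sup_left⟩
      | false =>
        obtain ⟨d, hd, hbd⟩ := satur_eq_false_iff hf |>.mp hy
        constructor
        · show satur f (a ⊓ b) = some (true ⊓ false)
          have : (true ⊓ false : Bool) = false := by decide
          rw [this, satur_eq_false_iff hf]
          exact ⟨d, hd, inf_le_right.trans hbd⟩
        · show satur f (a ⊔ b) = some (true ⊔ false)
          have : (true ⊔ false : Bool) = true := by decide
          rw [this, satur_eq_true_iff]
          exact ⟨c, hc, hca.trans le_sup_left⟩
    | false =>
      obtain ⟨d, hd, had⟩ := satur_eq_false_iff hf |>.mp hx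
      cases y with
      | true =>
        obtain ⟨c, hc, hcb⟩ := satur_eq_true_iff.mp hy
        constructor
        · show satur f (a ⊓ b) = some (false ⊓ true)
          have : (false ⊓ true : Bool) = false := by decide
          rw [this, satur_eq_false_iff hf]
          exact ⟨d, hd, inf_le_left.trans had⟩
        · show satur f (a ⊔ b) = some (false ⊔ true)
          have : (false ⊔ true : Bool) = true := by decide
          rw [this, satur_eq_true_iff]
          exact ⟨c, hc, hcb.trans le_sup_right⟩
      | false =>
        obtain ⟨d', hd', hbd'⟩ := satur_eq_false_iff hf |>.mp hy
        constructor
        · show satur f (a ⊓ b) = some (false ⊓ false)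
          have : (false ⊓ false : Bool) = false := by decide
          rw [this, satur_eq_false_iff hf]
          exact ⟨d, hd, inf_le_left.trans had⟩
        · show satur f (a ⊔ b) = some (false ⊔ false)
          have : (false ⊔ false : Bool) = false := by decide
          rw [this, satur_eq_false_iff hf]
          refine ⟨d ⊔ d', ?_, sup_le_sup had hbd'⟩
          have := (hf.2.2 hd hd').2
          simpa using this

lemma satur_ext {f : PMap L} (hf : PHom L f) : PExt (satur f) f := by
  intro x a hx
  cases a with
  | true => exact satur_eq_true_iff.mpr ⟨x, hx, le_refl _⟩
  | false => exact (satur_eq_false_iff hf).mpr ⟨x, hx, le_refl _⟩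

lemma satur_eq_self {f : PMap L} (hf : f ∈ MPHset L) : satur f = f :=
  hf.2 (satur f) (satur_phom hf.1) (satur_ext hf.1)

lemma mph_up {f : PMap L} (hf : f ∈ MPHset L) {c x : L}
    (hc : f c = some true) (hcx : c ≤ x) : f x = some true := by
  conv_lhs => rw [← satur_eq_self hf]
  exact satur_eq_true_iff.mpr ⟨c, hc, hcx⟩

lemma mph_down {f : PMap L} (hf : f ∈ MPHset L) {d x : L}
    (hd : f d = some false) (hxd : x ≤ d) : f x = some false := by
  conv_lhs => rw [← satur_eq_self hf]
  exact (satur_eq_false_iff hf.1).mpr ⟨d, hd, hxd⟩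

lemma mph_filter {f : PMap L} (hf : f ∈ MPHset L) : IsLatFilter L (pre1 f) := by
  refine ⟨⟨⊤, hf.1.2.1⟩, ?_, ?_⟩
  · intro a b ha hab
    exact mph_up hf ha hab
  · intro a b ha hb
    have := (hf.1.2.2 ha hb).1
    simpa [mem_pre1] using this

lemma mph_ideal {f : PMap L} (hf : f ∈ MPHset L) : IsLatIdeal L (pre0 f) := by
  refine ⟨⟨⊥, hf.1.1⟩, ?_, ?_⟩
  · intro a b ha hba
    exact mph_down hf ha hba
  · intro a b ha hb
    have := (hf.1.2.2 ha hb).2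
    simpa [mem_pre0] using this

/-- Zorn: every partial homomorphism extends to a maximal one. -/
lemma exists_mph_ext (f₀ : PMap L) (h₀ : PHom L f₀) :
    ∃ m, m ∈ MPHset L ∧ PExt m f₀ := by
  let T := {g : PMap L // PHom L g ∧ PExt g f₀}
  let r : T → T → Prop := fun g h => PExt h.1 g.1
  have hchain : ∀ c : Set T, IsChain r c → ∃ ub : T, ∀ a ∈ c, r a ub := by
    intro c hc
    by_cases hne : c.Nonempty
    · have hcons : ∀ g ∈ c, ∀ g' ∈ c, ∀ x (b b' : Bool),
          (g : T).1 x = some b → (g' : T).1 x = some b' → b = b' := by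
        intro g hg g' hg' x b b' h1 h2
        rcases eq_or_ne g g' with rfl | hne'
        · rw [h1] at h2; cases h2; rfl
        · rcases hc hg hg' hne' with h | h
          · have := h h1; rw [this] at h2; cases h2; rfl
          · have := h h2; rw [this] at h1; cases h1; rfl
      classical
      let u : PMap L := fun x =>
        if h : ∃ b : Bool, ∃ g ∈ c, (g : T).1 x = some b then some h.choose else none
      have hu : ∀ x (b : Bool), u x = some b ↔ ∃ g ∈ c, (g : T).1 x = some b := by
        intro x b
        constructor
        · intro h
          by_cases hex : ∃ b : Bool, ∃ g ∈ c, (g : T).1 x = some b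
          · rw [show u x = some hex.choose from dif_pos hex] at h
            cases h
            exact hex.choose_spec
          · rw [show u x = none from dif_neg hex] at h
            cases h
        · rintro ⟨g, hg, hgx⟩
          have hex : ∃ b : Bool, ∃ g ∈ c, (g : T).1 x = some b := ⟨b, g, hg, hgx⟩
          rw [show u x = some hex.choose from dif_pos hex]
          obtain ⟨g', hg', hg'x⟩ := hex.choose_spec
          rw [hcons g' hg' g hg x _ _ hg'x hgx]
      obtain ⟨g₀c, hg₀c⟩ := hne
      have huphom : PHom L u := by
        refine ⟨?_, ?_, ?_⟩
        · exact (hu ⊥ false).mpr ⟨g₀c, hg₀c, g₀c.2.1.1⟩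
        · exact (hu ⊤ true).mpr ⟨g₀c, hg₀c, g₀c.2.1.2.1⟩
        · intro a b x y hx hy
          obtain ⟨g, hg, hgx⟩ := (hu a x).mp hx
          obtain ⟨g', hg', hg'y⟩ := (hu b y).mp hy
          rcases eq_or_ne g g' with rfl | hne'
          · exact ⟨(hu _ _).mpr ⟨g, hg, (g.2.1.2.2 hgx hg'y).1⟩,
              (hu _ _).mpr ⟨g, hg, (g.2.1.2.2 hgx hg'y).2⟩⟩
          · rcases hc hg hg' hne' with h | h
            · have hgx' : (g' : T).1 a = some x := h hgx
              exact ⟨(hu _ _).mpr ⟨g', hg', (g'.2.1.2.2 hgx' hg'y).1⟩,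
                (hu _ _).mpr ⟨g', hg', (g'.2.1.2.2 hgx' hg'y).2⟩⟩
            · have hg'y' : (g : T).1 b = some y := h hg'y
              exact ⟨(hu _ _).mpr ⟨g, hg, (g.2.1.2.2 hgx hg'y').1⟩,
                (hu _ _).mpr ⟨g, hg, (g.2.1.2.2 hgx hg'y').2⟩⟩
      have huext : PExt u f₀ := by
        intro x a hx
        exact (hu x a).mpr ⟨g₀c, hg₀c, g₀c.2.2 hx⟩
      refine ⟨⟨u, huphom, huext⟩, ?_⟩
      intro g hg x a hx
      exact (hu x a).mpr ⟨g, hg, hx⟩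
    · refine ⟨⟨f₀, h₀, fun x a h => h⟩, ?_⟩
      intro a ha
      exact absurd ⟨a, ha⟩ hne
  have htrans : ∀ {a b c : T}, r a b → r b c → r a c :=
    fun h1 h2 x a hx => h2 (h1 hx)
  obtain ⟨m, hm⟩ := exists_maximal_of_chains_bounded hchain htrans
  refine ⟨m.1, ⟨m.2.1, ?_⟩, m.2.2⟩
  intro ψ hψ hext
  have hψf₀ : PExt ψ f₀ := fun x a hx => hext (m.2.2 hx)
  have hmψ : PExt m.1 ψ := hm ⟨ψ, hψ, hψf₀⟩ hext
  funext x
  cases hx : ψ x with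
  | some a => exact (hmψ hx).symm ▸ rfl
  | none =>
    cases hx' : m.1 x with
    | none => rfl
    | some a => rw [hext hx'] at hx; cases hx

noncomputable def dnm (f : PMap L) (a : L) : PMap L := fun x =>
  if f x = some true then some true else if x ≤ a then some false else none

lemma dnm_true_iff {f : PMap L} {a x : L} : dnm f a x = some true ↔ f x = some true := by
  simp only [dnm]
  split_ifs with h1 h2 <;> simp_all

lemma dnm_false_iff {f : PMap L} {a x : L} :
    dnm f a x = some false ↔ ¬ f x = some true ∧ x ≤ a := by
  simp only [dnm]
  split_ifs with h1 h2 <;> simp_all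

lemma dnm_phom {f : PMap L} (hf : f ∈ MPHset L) {a : L} (ha : f a = none) :
    PHom L (dnm f a) := by
  have hbotf : f ⊥ = some false := hf.1.1
  refine ⟨?_, ?_, ?_⟩
  · rw [dnm_false_iff]
    exact ⟨fun h => (by rw [hbotf] at h; cases h), bot_le⟩
  · rw [dnm_true_iff]; exact hf.1.2.1
  · intro p q x y hx hy
    cases x with
    | true =>
      have hp := dnm_true_iff.mp hx
      cases y with
      | true =>
        have hq := dnm_true_iff.mp hy
        constructor
        · show dnm f a (p ⊓ q) = some (true ⊓ true)
          have h' : (true ⊓ true : Bool) = true := by decide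
          rw [h', dnm_true_iff]
          have := (hf.1.2.2 hp hq).1
          simpa using this
        · show dnm f a (p ⊔ q) = some (true ⊔ true)
          have h' : (true ⊔ true : Bool) = true := by decide
          rw [h', dnm_true_iff]
          exact mph_up hf hp le_sup_left
      | false =>
        obtain ⟨hq1, hq2⟩ := dnm_false_iff.mp hy
        constructor
        · show dnm f a (p ⊓ q) = some (true ⊓ false)
          have h' : (true ⊓ false : Bool) = false := by decide
          rw [h', dnm_false_iff]
          refine ⟨fun h => hq1 (mph_up hf h inf_le_right), inf_le_right.trans hq2⟩
        · show dnm f a (p ⊔ q) = some (true ⊔ false)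
          have h' : (true ⊔ false : Bool) = true := by decide
          rw [h', dnm_true_iff]
          exact mph_up hf hp le_sup_left
    | false =>
      obtain ⟨hp1, hp2⟩ := dnm_false_iff.mp hx
      cases y with
      | true =>
        have hq := dnm_true_iff.mp hy
        constructor
        · show dnm f a (p ⊓ q) = some (false ⊓ true)
          have h' : (false ⊓ true : Bool) = false := by decide
          rw [h', dnm_false_iff]
          exact ⟨fun h => hp1 (mph_up hf h inf_le_left), inf_le_left.trans hp2⟩
        · show dnm f a (p ⊔ q) = some (false ⊔ true)
          have h' : (false ⊔ true : Bool) = true := by decide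
          rw [h', dnm_true_iff]
          exact mph_up hf hq le_sup_right
      | false =>
        obtain ⟨hq1, hq2⟩ := dnm_false_iff.mp hy
        constructor
        · show dnm f a (p ⊓ q) = some (false ⊓ false)
          have h' : (false ⊓ false : Bool) = false := by decide
          rw [h', dnm_false_iff]
          exact ⟨fun h => hp1 (mph_up hf h inf_le_left), inf_le_left.trans hp2⟩
        · show dnm f a (p ⊔ q) = some (false ⊔ false)
          have h' : (false ⊔ false : Bool) = false := by decide
          rw [h', dnm_false_iff]
          refine ⟨fun h => ?_, sup_le hp2 hq2⟩
          have : f a = some true := mph_up hf h (sup_le hp2 hq2)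
          rw [ha] at this; cases this

noncomputable def upm (f : PMap L) (a : L) : PMap L := fun x =>
  if f x = some false then some false else if a ≤ x then some true else none

lemma upm_false_iff {f : PMap L} {a x : L} : upm f a x = some false ↔ f x = some false := by
  simp only [upm]
  split_ifs with h1 h2 <;> simp_all

lemma upm_true_iff {f : PMap L} {a x : L} :
    upm f a x = some true ↔ ¬ f x = some false ∧ a ≤ x := by
  simp only [upm]
  split_ifs with h1 h2 <;> simp_all

lemma upm_phom {f : PMap L} (hf : f ∈ MPHset L) {a : L} (ha : f a = none) :
    PHom L (upm f a) := by
  have htopf : f ⊤ = some true := hf.1.2.1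
  refine ⟨?_, ?_, ?_⟩
  · rw [upm_false_iff]; exact hf.1.1
  · rw [upm_true_iff]
    exact ⟨fun h => (by rw [htopf] at h; cases h), le_top⟩
  · intro p q x y hx hy
    cases x with
    | false =>
      have hp := upm_false_iff.mp hx
      cases y with
      | false =>
        have hq := upm_false_iff.mp hy
        constructor
        · show upm f a (p ⊓ q) = some (false ⊓ false)
          have h' : (false ⊓ false : Bool) = false := by decide
          rw [h', upm_false_iff]
          exact mph_down hf hp inf_le_left
        · show upm f a (p ⊔ q) = some (false ⊔ false)
          have h' : (false ⊔ false : Bool) = false := by decide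
          rw [h', upm_false_iff]
          have := (hf.1.2.2 hp hq).2
          simpa using this
      | true =>
        obtain ⟨hq1, hq2⟩ := upm_true_iff.mp hy
        constructor
        · show upm f a (p ⊓ q) = some (false ⊓ true)
          have h' : (false ⊓ true : Bool) = false := by decide
          rw [h', upm_false_iff]
          exact mph_down hf hp inf_le_left
        · show upm f a (p ⊔ q) = some (false ⊔ true)
          have h' : (false ⊔ true : Bool) = true := by decide
          rw [h', upm_true_iff]
          exact ⟨fun h => hq1 (mph_down hf h le_sup_right), hq2.trans le_sup_right⟩
    | true =>
      obtain ⟨hp1, hp2⟩ := upm_true_iff.mp hx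
      cases y with
      | false =>
        have hq := upm_false_iff.mp hy
        constructor
        · show upm f a (p ⊓ q) = some (true ⊓ false)
          have h' : (true ⊓ false : Bool) = false := by decide
          rw [h', upm_false_iff]
          exact mph_down hf hq inf_le_right
        · show upm f a (p ⊔ q) = some (true ⊔ false)
          have h' : (true ⊔ false : Bool) = true := by decide
          rw [h', upm_true_iff]
          exact ⟨fun h => hp1 (mph_down hf h le_sup_left), hp2.trans le_sup_left⟩
      | true =>
        obtain ⟨hq1, hq2⟩ := upm_true_iff.mp hy
        constructor
        · show upm f a (p ⊓ q) = some (true ⊓ true)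
          have h' : (true ⊓ true : Bool) = true := by decide
          rw [h', upm_true_iff]
          refine ⟨fun h => ?_, le_inf hp2 hq2⟩
          have : f a = some false := mph_down hf h (le_inf hp2 hq2)
          rw [ha] at this; cases this
        · show upm f a (p ⊔ q) = some (true ⊔ true)
          have h' : (true ⊔ true : Bool) = true := by decide
          rw [h', upm_true_iff]
          refine ⟨fun h => ?_, hp2.trans le_sup_left⟩
          have : f a = some false := mph_down hf h (hp2.trans le_sup_left)
          rw [ha] at this; cases this

lemma exists_below (f : MPHsub L) {a : L} (ha : f.1 a = none) :
    ∃ g : MPHsub L, EM L f g ∧ g.1 a = some false := by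
  obtain ⟨m, hm, hext⟩ := exists_mph_ext (dnm f.1 a) (dnm_phom f.2 ha)
  refine ⟨⟨m, hm⟩, ?_, ?_⟩
  · intro x p q hp hq
    cases p with
    | false => exact Bool.false_le q
    | true =>
      have h2 : m x = some true := hext (dnm_true_iff.mpr hp)
      have hq' : m x = some q := hq
      rw [h2] at hq'
      cases hq'
      exact le_refl _
  · exact hext (dnm_false_iff.mpr ⟨fun h => (by rw [ha] at h; cases h), le_refl a⟩)

lemma exists_above (f : MPHsub L) {a : L} (ha : f.1 a = none) :
    ∃ g : MPHsub L, EM L g f ∧ g.1 a = some true := by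
  obtain ⟨m, hm, hext⟩ := exists_mph_ext (upm f.1 a) (upm_phom f.2 ha)
  refine ⟨⟨m, hm⟩, ?_, ?_⟩
  · intro x p q hp hq
    cases q with
    | true => exact Bool.le_true p
    | false =>
      have h2 : m x = some false := hext (upm_false_iff.mpr hq)
      have hp' : m x = some p := hp
      rw [h2] at hp'
      cases hp'
      exact le_refl _
  · exact hext (upm_true_iff.mpr ⟨fun h => (by rw [ha] at h; cases h), le_refl a⟩)

lemma evalM_mem (a : L) : evalM L a ∈ MPE (EM L) := by
  constructor
  · intro f g hE p q hp hq
    exact hE hp hq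
  · intro ψ hψ hext
    funext f
    cases hfa : f.1 a with
    | some b =>
      have h2 := hext (show evalM L a f = some b from hfa)
      show ψ f = evalM L a f
      rw [h2]
      exact hfa.symm
    | none =>
      have h3 : evalM L a f = none := hfa
      rw [h3]
      cases hψf : ψ f with
      | none => rfl
      | some b =>
        exfalso
        cases b with
        | true =>
          obtain ⟨g, hEg, hga⟩ := exists_below f hfa
          have : ψ g = some false := hext (hga : evalM L a g = some false)
          exact not_true_le_false (hψ hEg hψf this)
        | false =>
          obtain ⟨g, hEg, hga⟩ := exists_above f hfa
          have : ψ g = some true := hext (hga : evalM L a g = some true)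
          exact not_true_le_false (hψ hEg this hψf)

lemma erelp_witness {X' : Type*} {f g : PMap X'} (h : ¬ ErelP f g) :
    ∃ x, f x = some true ∧ g x = some false := by
  by_contra hc
  push_neg at hc
  apply h
  intro x a b hfa hgb
  cases a with
  | false => exact Bool.false_le b
  | true =>
    cases b with
    | true => exact le_refl _
    | false => exact absurd hgb (hc x hfa)


end LatAux

end Aux

/-- **Density.** Let `L` be a bounded lattice, `X = D♭(L)`, and
`e : L → C(X) = MPE(X,2)` the embedding `a ↦ e_a`. Every `φ ∈ C(X)` is the
join of the meets `⋀ e(F)` (`F` a filter of `L`) lying below it, and the meet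
of the joins `⋁ e(I)` (`I` an ideal of `L`) lying above it: the completion
`(e, C(X))` is dense. -/
theorem stmt_7 (L : Type*) [Lattice L] [BoundedOrder L] :
    ∃ inst : CompleteLattice (CX L),
      (∀ φ ψ : CX L, inst.le φ ψ ↔ pre1 φ.1 ⊆ pre1 ψ.1) ∧
      ∃ e : L → CX L,
        (∀ a : L, (e a).1 = evalM L a) ∧
        ∀ φ : CX L,
          φ = inst.sSup {ψ : CX L | ∃ F : Set L, IsLatFilter L F ∧
                ψ = inst.sInf (e '' F) ∧ inst.le ψ φ} ∧
          φ = inst.sInf {ψ : CX L | ∃ I : Set L, IsLatIdeal L I ∧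
                ψ = inst.sSup (e '' I) ∧ inst.le φ ψ} := by
  classical
  have hrefl : ∀ f : MPHsub L, EM L f f := em_refl
  letI po : PartialOrder (CX L) :=
    { le := fun φ ψ => pre1 φ.1 ⊆ pre1 ψ.1
      le_refl := fun φ => subset_rfl
      le_trans := fun a b c h1 h2 x hx => h2 (h1 hx)
      le_antisymm := fun a b h1 h2 =>
        Subtype.ext (mpe_ext hrefl a.2 b.2 (Set.Subset.antisymm h1 h2)) }
  letI iInfI : InfSet (CX L) := ⟨infM (EM L) hrefl⟩
  have hglb : ∀ S : Set (CX L), @IsGLB (CX L) po.toPreorder.toLE S (sInf S) := by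
    intro S
    constructor
    · intro ψ hψ
      show pre1 (infM (EM L) hrefl S).1 ⊆ pre1 ψ.1
      rw [pre1_infM]
      exact Set.biInter_subset_of_mem hψ
    · intro χ hχ
      show pre1 χ.1 ⊆ pre1 (infM (EM L) hrefl S).1
      rw [pre1_infM]
      exact Set.subset_iInter₂ fun ψ hψ => hχ hψ
  letI inst : CompleteLattice (CX L) := completeLatticeOfInf _ hglb
  have hsupM_lub : ∀ S : Set (CX L), @IsLUB (CX L) inst.toLE S (supM (EM L) hrefl S) := by
    intro S
    constructor
    · intro ψ hψ
      show pre1 ψ.1 ⊆ pre1 (supM (EM L) hrefl S).1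
      rw [pre1_supM]
      refine (Set.subset_biUnion_of_mem (u := fun ψ : CX L => pre1 ψ.1) hψ).trans (subset_lam_rho _)
    · intro χ hχ
      show pre1 (supM (EM L) hrefl S).1 ⊆ pre1 χ.1
      rw [pre1_supM]
      have hsub : (⋃ ψ ∈ S, pre1 ψ.1) ⊆ pre1 χ.1 :=
        Set.iUnion₂_subset fun ψ hψ => hχ hψ
      have h2 : lam (EM L) (rho (EM L) (⋃ ψ ∈ S, pre1 ψ.1)) ⊆
          lam (EM L) (rho (EM L) (pre1 χ.1)) := lam_anti (rho_anti hsub)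
      rwa [← mpe_pre0_eq hrefl χ.2, ← mpe_pre1_eq hrefl χ.2] at h2
  refine ⟨inst, fun φ ψ => Iff.rfl, fun a => ⟨evalM L a, evalM_mem a⟩, fun a => rfl, ?_⟩
  intro φ
  set e : L → CX L := fun a => ⟨evalM L a, evalM_mem a⟩ with he
  constructor
  · -- φ = sSup S₁
    apply le_antisymm
    · -- φ ≤ sSup S₁
      intro f hf
      set F : Set L := {a : L | f.1 a = some true} with hF
      have hFfil : IsLatFilter L F := mph_filter f.2
      set μ : CX L := sInf (e '' F) with hμ
      have hμ1 : pre1 μ.1 = ⋂ ψ ∈ e '' F, pre1 ψ.1 := pre1_infM hrefl _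
      have hμmem : ∀ g : MPHsub L, g ∈ pre1 μ.1 → ∀ a ∈ F, g.1 a = some true := by
        intro g hg a ha
        exact Set.mem_iInter₂.mp (hμ1 ▸ hg) (e a) ⟨a, ha, rfl⟩
      have hfμ : f ∈ pre1 μ.1 := by
        rw [hμ1]
        exact Set.mem_iInter₂.mpr (by rintro ψ ⟨a, ha, rfl⟩; exact ha)
      have hμφ : inst.le μ φ := by
        show pre1 μ.1 ⊆ pre1 φ.1
        rw [mpe_pre1_eq hrefl φ.2]
        intro g hg h hh hEM
        have hfl : f ∈ lam (EM L) (pre0 φ.1) := (mpe_pre1_eq hrefl φ.2) ▸ hf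
        obtain ⟨x, hfx, hhx⟩ := erelp_witness (hfl h hh)
        exact not_true_le_false (hEM (hμmem g hg x hfx) hhx)
      have hμS : μ ∈ {ψ : CX L | ∃ F' : Set L, IsLatFilter L F' ∧
          ψ = inst.sInf (e '' F') ∧ inst.le ψ φ} := ⟨F, hFfil, rfl, hμφ⟩
      exact le_sSup hμS hfμ
    · exact sSup_le fun ψ hψ => hψ.choose_spec.2.2
  · -- φ = sInf S₂
    apply le_antisymm
    · exact le_sInf fun ψ hψ => hψ.choose_spec.2.2
    · show pre1 (infM (EM L) hrefl _).1 ⊆ pre1 φ.1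
      intro x hx
      rw [pre1_infM] at hx
      rw [mpe_pre1_eq hrefl φ.2]
      intro h hh hEM
      set I : Set L := {a : L | h.1 a = some false} with hI
      have hIid : IsLatIdeal L I := mph_ideal h.2
      set ν : CX L := sSup (e '' I) with hν
      have hνeq : ν = supM (EM L) hrefl (e '' I) :=
        (isLUB_sSup _).unique (hsupM_lub _)
      have hν0 : pre0 ν.1 = ⋂ ψ ∈ e '' I, pre0 ψ.1 := by
        rw [hνeq]; exact pre0_supM hrefl _
      have hνmem : ∀ g : MPHsub L, g ∈ pre0 ν.1 → ∀ a ∈ I, g.1 a = some false := by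
        intro g hg a ha
        exact Set.mem_iInter₂.mp (hν0 ▸ hg) (e a) ⟨a, ha, rfl⟩
      have hφν : inst.le φ ν := by
        apply pre1_anti hrefl φ.2 ν.2
        intro g hg
        rw [mpe_pre0_eq hrefl φ.2]
        intro k hk hEMkg
        have hkl : k ∈ lam (EM L) (pre0 φ.1) := (mpe_pre1_eq hrefl φ.2) ▸ hk
        obtain ⟨c, hkc, hhc⟩ := erelp_witness (hkl h hh)
        exact not_true_le_false (hEMkg hkc (hνmem g hg c hhc))
      have hνS : ν ∈ {ψ : CX L | ∃ I' : Set L, IsLatIdeal L I' ∧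
          ψ = inst.sSup (e '' I') ∧ inst.le φ ψ} := ⟨I, hIid, rfl, hφν⟩
      have hxν : x ∈ pre1 ν.1 := Set.mem_iInter₂.mp hx ν hνS
      have hxl : x ∈ lam (EM L) (pre0 ν.1) := (mpe_pre1_eq hrefl ν.2) ▸ hxν
      have hhν : h ∈ pre0 ν.1 := by
        rw [hν0]
        exact Set.mem_iInter₂.mpr (by rintro ψ ⟨a, ha, rfl⟩; exact ha)
      exact hxl h hhν hEM


end CanExt
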